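/- Suppose g : S → ℝ (S ⊆ ℝ) is fullness preserving on each member of a finite partition S = S₁ ⊔ ... ⊔ S_n where the images g[S₁], ..., g[S_n] are pairwise disjoint with pairwise disjoint (up to null sets) measurable envelopes. If W ⊆ S satisfies μ*(W ∩ S_i) = μ*(S_i) for each i, then μ*(g[W]) = μ*(g[S]). -/

import Mathlib

open MeasureTheory

lemma outer_add_of_envelopes {n : ℕ} (A E : Fin n → Set ℝ)
    (hE : ∀ i, MeasurableSet (E i)) (hAE : ∀ i, A i ⊆ E i)
    (hEdisj : ∀ i j, i ≠ j → volume (E i ∩ E j) = 0) :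
    volume (⋃ i, A i) = ∑ i, volume (A i) := by
  apply le_antisymm
  · calc volume (⋃ i, A i) ≤ ∑' i, volume (A i) := measure_iUnion_le A
    _ = ∑ i, volume (A i) := tsum_fintype _
  · set H := toMeasurable volume (⋃ i, A i) with hH
    have hsub : ∀ i, A i ⊆ H ∩ E i := fun i =>
      Set.subset_inter ((Set.subset_iUnion A i).trans (subset_toMeasurable _ _)) (hAE i)
    have h1 : ∑ i, volume (A i) ≤ ∑ i, volume (H ∩ E i) :=
      Finset.sum_le_sum fun i _ => measure_mono (hsub i)
    have h2 : volume (⋃ i, H ∩ E i) = ∑' i, volume (H ∩ E i) := by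
      refine measure_iUnion₀ ?_ fun i => ((measurableSet_toMeasurable _ _).inter (hE i)).nullMeasurableSet
      intro i j hij
      refine measure_mono_null ?_ (hEdisj i j hij)
      exact Set.inter_subset_inter Set.inter_subset_right Set.inter_subset_right
    calc ∑ i, volume (A i) ≤ ∑ i, volume (H ∩ E i) := h1
      _ = ∑' i, volume (H ∩ E i) := (tsum_fintype _).symm
      _ = volume (⋃ i, H ∩ E i) := h2.symm
      _ ≤ volume H := measure_mono (Set.iUnion_subset fun i => Set.inter_subset_left)
      _ = volume (⋃ i, A i) := by rw [hH, measure_toMeasurable]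

theorem fullness_preserving_union (g : ℝ → ℝ) (S : Set ℝ) (hS : volume S < ⊤)
    (n : ℕ) (hn : 1 ≤ n) (P : Fin n → Set ℝ)
    (hPsub : ∀ i, P i ⊆ S) (hPdisj : (Set.univ : Set (Fin n)).PairwiseDisjoint P)
    (hPcover : (⋃ i, P i) = S)
    (hfp : ∀ i, ∀ W ⊆ P i, volume W = volume (P i) →
      volume (g '' W) = volume (g '' (P i)))
    (himgdisj : (Set.univ : Set (Fin n)).PairwiseDisjoint (fun i => g '' (P i)))
    (E : Fin n → Set ℝ) (hE : ∀ i, MeasurableSet (E i))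
    (hEsub : ∀ i, g '' (P i) ⊆ E i)
    (hEenv : ∀ i, ∀ F : Set ℝ, MeasurableSet F → F ⊆ E i \ (g '' (P i)) →
      volume F = 0)
    (hEdisj : ∀ i j, i ≠ j → volume (E i ∩ E j) = 0)
    (W : Set ℝ) (hW : W ⊆ S) (hWfull : ∀ i, volume (W ∩ P i) = volume (P i)) :
    volume (g '' W) = volume (g '' S) := by
  have hWun : W = ⋃ i, W ∩ P i := by
    rw [← Set.inter_iUnion, hPcover, Set.inter_eq_left.mpr hW]
  have hgW : g '' W = ⋃ i, g '' (W ∩ P i) := by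
    conv_lhs => rw [hWun]
    rw [Set.image_iUnion]
  have hgS : g '' S = ⋃ i, g '' (P i) := by
    rw [← hPcover, Set.image_iUnion]
  rw [hgW, hgS,
    outer_add_of_envelopes _ E hE
      (fun i => (Set.image_mono (f := g) Set.inter_subset_right).trans (hEsub i)) hEdisj,
    outer_add_of_envelopes _ E hE hEsub hEdisj]
  exact Finset.sum_congr rfl fun i _ =>
    hfp i (W ∩ P i) Set.inter_subset_right (hWfull i)
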